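/- There exists a unique k-linear map ∂ : R → R such that ∂(1) = 0, ∂(x₁) = ∂(x₂) = 1, and the twisted Leibniz rule ∂(f·g) = ∂(f)·g + s(f)·∂(g) holds for all f, g ∈ R. -/

import Mathlib

/-- The anticommutation relation `x₁x₂ + x₂x₁ = 0` on the free `k`-algebra
on two generators. -/
inductive OddRel (k : Type*) [CommRing k] :
    FreeAlgebra k (Fin 2) → FreeAlgebra k (Fin 2) → Prop
  | anticomm : OddRel k
      (FreeAlgebra.ι k (0 : Fin 2) * FreeAlgebra.ι k (1 : Fin 2) +
        FreeAlgebra.ι k (1 : Fin 2) * FreeAlgebra.ι k (0 : Fin 2)) 0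

/-- The `k`-algebra of skew polynomials in two variables,
`R = k⟨x₁,x₂⟩/(x₁x₂ + x₂x₁)`. -/
abbrev OddPoly (k : Type*) [CommRing k] := RingQuot (OddRel k)

/-- The generators `x₁ = X k 0` and `x₂ = X k 1` of `R`. -/
noncomputable def X (k : Type*) [CommRing k] (i : Fin 2) : OddPoly k :=
  RingQuot.mkAlgHom k (OddRel k) (FreeAlgebra.ι k i)

lemma odd_anticomm (k : Type*) [CommRing k] :
    X k 0 * X k 1 + X k 1 * X k 0 = 0 := by
  have := RingQuot.mkAlgHom_rel k (OddRel.anticomm (k := k))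
  simpa [X, map_add, map_mul] using this

noncomputable def Phi (k : Type*) [CommRing k] (s : OddPoly k ≃ₐ[k] OddPoly k)
    (hs1 : s (X k 0) = - X k 1) (hs2 : s (X k 1) = - X k 0) :
    OddPoly k →ₐ[k] Matrix (Fin 2) (Fin 2) (OddPoly k) :=
  RingQuot.liftAlgHom k (s := OddRel k)
    ⟨FreeAlgebra.lift k (fun i => !![s (X k i), 1; 0, X k i]), by
      rintro x y ⟨⟩
      simp only [map_add, map_mul, map_zero, FreeAlgebra.lift_ι_apply]
      have hac := odd_anticomm k
      have hac' : X k 1 * X k 0 + X k 0 * X k 1 = 0 := by rw [add_comm]; exact hac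
      have hneg : ∀ x y : OddPoly k, -x * -y = x * y := fun x y => neg_mul_neg x y
      ext i j
      fin_cases i <;> fin_cases j <;>
        simp [Matrix.mul_apply, Fin.sum_univ_two, hs1, hs2, hneg, hac, hac']⟩

lemma Phi_mk (k : Type*) [CommRing k] (s : OddPoly k ≃ₐ[k] OddPoly k)
    (hs1 : s (X k 0) = - X k 1) (hs2 : s (X k 1) = - X k 0)
    (a : FreeAlgebra k (Fin 2)) :
    Phi k s hs1 hs2 (RingQuot.mkAlgHom k (OddRel k) a) =
      FreeAlgebra.lift k (fun i => !![s (X k i), 1; 0, X k i]) a := by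
  rw [Phi, RingQuot.liftAlgHom_mkAlgHom_apply]

lemma Phi_key (k : Type*) [CommRing k] (s : OddPoly k ≃ₐ[k] OddPoly k)
    (hs1 : s (X k 0) = - X k 1) (hs2 : s (X k 1) = - X k 0)
    (f : OddPoly k) :
    Phi k s hs1 hs2 f 0 0 = s f ∧ Phi k s hs1 hs2 f 1 0 = 0 ∧
      Phi k s hs1 hs2 f 1 1 = f := by
  obtain ⟨a, rfl⟩ := RingQuot.mkAlgHom_surjective k (OddRel k) f
  induction a using FreeAlgebra.induction with
  | grade0 r =>
      rw [AlgHom.commutes]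
      refine ⟨?_, ?_, ?_⟩ <;>
        simp [Matrix.algebraMap_matrix_apply, AlgHom.commutes]
  | grade1 i =>
      rw [show RingQuot.mkAlgHom k (OddRel k) (FreeAlgebra.ι k i) = X k i from rfl,
        X, Phi_mk, FreeAlgebra.lift_ι_apply]
      simp [show RingQuot.mkAlgHom k (OddRel k) (FreeAlgebra.ι k i) = X k i from rfl]
  | add a b ha hb =>
      simp only [map_add, Matrix.add_apply, ha.1, ha.2.1, ha.2.2, hb.1, hb.2.1, hb.2.2]
      exact ⟨by simp, by simp, by simp⟩
  | mul a b ha hb =>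
      simp only [map_mul, Matrix.mul_apply, Fin.sum_univ_two,
        ha.1, ha.2.1, ha.2.2, hb.1, hb.2.1, hb.2.2]
      exact ⟨by simp, by simp, by simp⟩

noncomputable def Dmap (k : Type*) [CommRing k] (s : OddPoly k ≃ₐ[k] OddPoly k)
    (hs1 : s (X k 0) = - X k 1) (hs2 : s (X k 1) = - X k 0) :
    OddPoly k →ₗ[k] OddPoly k where
  toFun f := Phi k s hs1 hs2 f 0 1
  map_add' a b := by simp
  map_smul' c a := by simp

lemma Dmap_props (k : Type*) [CommRing k] (s : OddPoly k ≃ₐ[k] OddPoly k)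
    (hs1 : s (X k 0) = - X k 1) (hs2 : s (X k 1) = - X k 0) :
    Dmap k s hs1 hs2 1 = 0 ∧ Dmap k s hs1 hs2 (X k 0) = 1 ∧
      Dmap k s hs1 hs2 (X k 1) = 1 ∧
      ∀ f g : OddPoly k, Dmap k s hs1 hs2 (f * g) =
        Dmap k s hs1 hs2 f * g + s f * Dmap k s hs1 hs2 g := by
  refine ⟨?_, ?_, ?_, ?_⟩
  · show Phi k s hs1 hs2 1 0 1 = 0
    rw [map_one]
    simp [Matrix.one_apply]
  · show Phi k s hs1 hs2 (X k 0) 0 1 = 1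
    rw [X, Phi_mk, FreeAlgebra.lift_ι_apply]
    simp
  · show Phi k s hs1 hs2 (X k 1) 0 1 = 1
    rw [X, Phi_mk, FreeAlgebra.lift_ι_apply]
    simp
  · intro f g
    show Phi k s hs1 hs2 (f * g) 0 1 =
      Phi k s hs1 hs2 f 0 1 * g + s f * Phi k s hs1 hs2 g 0 1
    rw [map_mul, Matrix.mul_apply, Fin.sum_univ_two,
      (Phi_key k s hs1 hs2 f).1, (Phi_key k s hs1 hs2 g).2.2]
    rw [add_comm]

/-- There is a unique `k`-linear map `∂ : R → R` with `∂1 = 0`,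
`∂x₁ = ∂x₂ = 1`, satisfying the twisted Leibniz rule
`∂(fg) = ∂(f)g + s(f)∂(g)`. -/
theorem stmt1 (k : Type*) [CommRing k]
    (s : OddPoly k ≃ₐ[k] OddPoly k)
    (hs1 : s (X k 0) = - X k 1) (hs2 : s (X k 1) = - X k 0)
 :
    ∃! D : OddPoly k →ₗ[k] OddPoly k,
      D 1 = 0 ∧ D (X k 0) = 1 ∧ D (X k 1) = 1 ∧
      ∀ f g : OddPoly k, D (f * g) = D f * g + s f * D g := by
  obtain ⟨h1, h2, h3, h4⟩ := Dmap_props k s hs1 hs2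
  refine ⟨Dmap k s hs1 hs2, ⟨h1, h2, h3, h4⟩, ?_⟩
  rintro D ⟨g1, g2, g3, g4⟩
  ext f
  obtain ⟨a, rfl⟩ := RingQuot.mkAlgHom_surjective k (OddRel k) f
  induction a using FreeAlgebra.induction with
  | grade0 r =>
      rw [AlgHom.commutes]
      have : (algebraMap k (OddPoly k)) r = r • (1 : OddPoly k) := by
        rw [Algebra.smul_def, mul_one]
      rw [this, map_smul, map_smul, g1, h1]
  | grade1 i =>
      have : RingQuot.mkAlgHom k (OddRel k) (FreeAlgebra.ι k i) = X k i := rfl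
      rw [this]
      fin_cases i
      · exact g2.trans h2.symm
      · exact g3.trans h3.symm
  | add a b ha hb => rw [map_add, map_add, map_add, ha, hb]
  | mul a b ha hb => rw [map_mul, g4, h4, ha, hb]
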